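/- arXiv:2308.09625 — 2 statements merged into one kernel-verified Lean document; each statement's English description precedes it below -/
import Mathlib

section
/- Let G be a d-weighted reachability game and let ≲ be either the componentwise order ≤_C or the lexicographic order ≤_L on (ℕ ∪ {∞})^d. For every vertex v and every ℓ ≥ |V|, I^ℓ(v) = I^{|V|}(v); that is, the fixpoint algorithm computing the sets Iᵏ reaches its fixpoint within at most |V| iterations (and hence terminates in at most |V| + 1 iterations). -/
open Classical

/-- Cost profiles: `d`-tuples over `ℕ ∪ {∞}`. -/
abbrev CostP (d : ℕ) := Fin d → ℕ∞

/-- The componentwise order `≤_C` on `(ℕ ∪ {∞})^d`. -/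
def leC {d : ℕ} (x y : CostP d) : Prop := x ≤ y

/-- The strict lexicographic order `<_L` on `(ℕ ∪ {∞})^d`. -/
def ltL {d : ℕ} (x y : CostP d) : Prop :=
  ∃ i, (∀ j, j < i → x j = y j) ∧ x i < y i

/-- The lexicographic order `≤_L` on `(ℕ ∪ {∞})^d`. -/
def leL {d : ℕ} (x y : CostP d) : Prop := x = y ∨ ltL x y

/-- Minimal elements of `X` with respect to an order `le`. -/
def minimalSet {α : Type*} (le : α → α → Prop) (X : Set α) : Set α :=
  { x | x ∈ X ∧ ∀ y ∈ X, le y x → y = x }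

/-- Upward closure of `X` with respect to an order `le`. -/
def upSet {α : Type*} (le : α → α → Prop) (X : Set α) : Set α :=
  { z | ∃ x ∈ X, le x z }

/-- Translation of a set of cost profiles by (the cast of) a tuple `c ∈ ℕ^d`. -/
def addW {d : ℕ} (X : Set (CostP d)) (c : Fin d → ℕ) : Set (CostP d) :=
  { z | ∃ x ∈ X, z = x + fun i => (c i : ℕ∞) }

/-- A `d`-weighted reachability game: a finite directed graph whose vertices are
partitioned into Player 1's vertices `V1` and Player 2's vertices (the complement),
an edge relation `E` such that every vertex has a successor, a `d`-dimensional
weight function `w` on edges, and a target set `F`. -/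
structure MWGame (V : Type*) (d : ℕ) where
  V1 : Set V
  E : V → V → Prop
  succ_nonempty : ∀ v, ∃ v', E v v'
  w : V → V → Fin d → ℕ
  F : Set V

namespace MWGame

variable {V : Type*} {d : ℕ}

/-- Strategies of Player 1: a choice of successor for every history
(represented as the pair (strict past, current vertex)), valid at Player 1's vertices. -/
def Strat1 (G : MWGame V d) :=
  { σ : List V → V → V // ∀ h u, u ∈ G.V1 → G.E u (σ h u) }

/-- Strategies of Player 2. -/
def Strat2 (G : MWGame V d) :=
  { σ : List V → V → V // ∀ h u, u ∉ G.V1 → G.E u (σ h u) }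

/-- The pair (strict past, current vertex) after `n` steps of the play consistent
with `σ₁` and `σ₂` from `v`. -/
noncomputable def outAux (G : MWGame V d) (σ₁ : G.Strat1) (σ₂ : G.Strat2) (v : V) :
    ℕ → List V × V
  | 0 => ([], v)
  | n + 1 =>
    let q := G.outAux σ₁ σ₂ v n
    (q.1 ++ [q.2], if q.2 ∈ G.V1 then σ₁.1 q.1 q.2 else σ₂.1 q.1 q.2)

/-- `Out(σ₁,σ₂,v)`: the unique play from `v` consistent with `σ₁` and `σ₂`. -/
noncomputable def out (G : MWGame V d) (σ₁ : G.Strat1) (σ₂ : G.Strat2) (v : V) (n : ℕ) : V :=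
  (G.outAux σ₁ σ₂ v n).2

/-- The cost profile of a play: the componentwise sum of weights up to the first
visit of the target set, and `(∞,…,∞)` if the target set is never visited. -/
noncomputable def cost (G : MWGame V d) (ρ : ℕ → V) : CostP d :=
  if h : ∃ ℓ, ρ ℓ ∈ G.F then
    fun i => ∑ n ∈ Finset.range (Nat.find h), (G.w (ρ n) (ρ (n + 1)) i : ℕ∞)
  else ⊤

/-- `Ensure^k(v)`: cost profiles that Player 1 can ensure from `v` within `k` steps. -/
def EnsureK (G : MWGame V d) (le : CostP d → CostP d → Prop) (k : ℕ) (v : V) :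
    Set (CostP d) :=
  { x | ∃ σ₁ : G.Strat1, ∀ σ₂ : G.Strat2,
      le (G.cost (G.out σ₁ σ₂ v)) x ∧
      ∀ h : (∃ ℓ, G.out σ₁ σ₂ v ℓ ∈ G.F), Nat.find h ≤ k }

/-- `Ensure(v)`: cost profiles that Player 1 can ensure from `v`. -/
def Ensure (G : MWGame V d) (le : CostP d → CostP d → Prop) (v : V) : Set (CostP d) :=
  { x | ∃ σ₁ : G.Strat1, ∀ σ₂ : G.Strat2, le (G.cost (G.out σ₁ σ₂ v)) x }

/-- The sets `Iᵏ(v)` computed by the fixpoint algorithm, relative to the order `le`. -/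
noncomputable def Iset (G : MWGame V d) (le : CostP d → CostP d → Prop) :
    ℕ → V → Set (CostP d)
  | 0, v => if v ∈ G.F then {0} else {⊤}
  | k + 1, v =>
    if v ∈ G.F then {0}
    else if v ∈ G.V1 then
      minimalSet le (⋃ v' ∈ { u | G.E v u }, addW (upSet le (G.Iset le k v')) (G.w v v'))
    else
      minimalSet le (⋂ v' ∈ { u | G.E v u }, addW (upSet le (G.Iset le k v')) (G.w v v'))

end MWGame

section OrderFacts

variable {d : ℕ}

lemma ltL_of_le_of_ne {x y : CostP d} (h : ∀ i, x i ≤ y i) (hne : x ≠ y) : ltL x y := by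
  classical
  have hex : ∃ i, x i ≠ y i := by
    by_contra hc; push_neg at hc; exact hne (funext hc)
  obtain ⟨i, hi⟩ := hex
  set T : Finset (Fin d) := Finset.univ.filter fun j => x j ≠ y j with hT
  have hTne : T.Nonempty := ⟨i, by simp [hT, hi]⟩
  refine ⟨T.min' hTne, fun j hj => ?_, ?_⟩
  · by_contra hc
    exact absurd (T.min'_le j (by simp [hT, hc])) (not_le.mpr hj)
  · refine lt_of_le_of_ne (h _) ?_
    have := T.min'_mem hTne
    simpa [hT] using this
 
lemma ltL_trans {x y z : CostP d} (h1 : ltL x y) (h2 : ltL y z) : ltL x z := by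
  obtain ⟨i, hi, hi'⟩ := h1; obtain ⟨j, hj, hj'⟩ := h2
  rcases lt_trichotomy i j with h | h | h
  · exact ⟨i, fun k hk => (hi k hk).trans (hj k (hk.trans h)), hi'.trans_le (hj i h).le⟩
  · subst h; exact ⟨i, fun k hk => (hi k hk).trans (hj k hk), hi'.trans hj'⟩
  · exact ⟨j, fun k hk => (hi k (hk.trans h)).trans (hj k hk), by rw [hi j h]; exact hj'⟩

lemma ltL_wf : WellFounded (@ltL d) := by
  have h : WellFoundedLT (Lex (Fin d → ℕ∞)) := inferInstance
  exact h.wf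

variable {le : CostP d → CostP d → Prop}

lemma qle_of_forall_le (hle : le = leC ∨ le = leL) {x y : CostP d}
    (h : ∀ i, x i ≤ y i) : le x y := by
  rcases hle with rfl | rfl
  · exact h
  · by_cases hxy : x = y
    · exact Or.inl hxy
    · exact Or.inr (ltL_of_le_of_ne h hxy)

lemma qle_refl' (hle : le = leC ∨ le = leL) (x : CostP d) : le x x :=
  qle_of_forall_le hle fun _ => le_rfl

lemma qle_top' (hle : le = leC ∨ le = leL) (x : CostP d) : le x ⊤ :=
  qle_of_forall_le hle fun _ => le_top

lemma qle_trans' (hle : le = leC ∨ le = leL) {x y z : CostP d}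
    (h1 : le x y) (h2 : le y z) : le x z := by
  rcases hle with rfl | rfl
  · exact le_trans h1 h2
  · rcases h1 with rfl | h1
    · exact h2
    · rcases h2 with rfl | h2
      · exact Or.inr h1
      · exact Or.inr (ltL_trans h1 h2)

lemma ltL_of_le_of_ne' (hle : le = leC ∨ le = leL) {x y : CostP d}
    (h : le x y) (hne : x ≠ y) : ltL x y := by
  rcases hle with rfl | rfl
  · exact ltL_of_le_of_ne (fun i => h i) hne
  · rcases h with rfl | h
    · exact absurd rfl hne
    · exact h

lemma exists_minimal_le (hle : le = leC ∨ le = leL) {A : Set (CostP d)} {a : CostP d}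
    (ha : a ∈ A) : ∃ m ∈ minimalSet le A, le m a := by
  obtain ⟨m, hm, hmin⟩ := ltL_wf.has_min {x | x ∈ A ∧ le x a} ⟨a, ha, qle_refl' hle a⟩
  refine ⟨m, ⟨hm.1, fun y hy hym => ?_⟩, hm.2⟩
  by_contra hne
  exact hmin y ⟨hy, qle_trans' hle hym hm.2⟩ (ltL_of_le_of_ne' hle hym hne)

lemma upSet_minimalSet (hle : le = leC ∨ le = leL) (A : Set (CostP d)) :
    upSet le (minimalSet le A) = upSet le A := by
  ext b; constructor
  · rintro ⟨x, hx, hxb⟩; exact ⟨x, hx.1, hxb⟩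
  · rintro ⟨x, hx, hxb⟩
    obtain ⟨m, hm, hma⟩ := exists_minimal_le hle hx
    exact ⟨m, hm, qle_trans' hle hma hxb⟩

end OrderFacts
section GameFacts

variable {V : Type*} {d : ℕ} (G : MWGame V d) {le : CostP d → CostP d → Prop}

/-- `U k v`: the upward closure of `Iᵏ(v)`. -/
def UU (G : MWGame V d) (le : CostP d → CostP d → Prop) (k : ℕ) (v : V) : Set (CostP d) :=
  upSet le (G.Iset le k v)

lemma Iset_F {v : V} (hF : v ∈ G.F) (k : ℕ) : G.Iset le k v = {0} := by
  cases k <;> simp [MWGame.Iset, hF]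

lemma UU_F {v : V} (hF : v ∈ G.F) (k : ℕ) : UU G le k v = upSet le ({0} : Set (CostP d)) := by
  rw [UU, Iset_F G hF]

lemma UU_upclosed (hle : le = leC ∨ le = leL) {k : ℕ} {v : V} {x y : CostP d}
    (hx : x ∈ UU G le k v) (hxy : le x y) : y ∈ UU G le k v := by
  obtain ⟨m, hm, hmx⟩ := hx
  exact ⟨m, hm, qle_trans' hle hmx hxy⟩

lemma top_eq_add {c : Fin d → ℕ} : (⊤ : CostP d) = ⊤ + fun i => ((c i : ℕ∞)) := by
  funext i
  simp

lemma Iset_nonempty (hle : le = leC ∨ le = leL) : ∀ (k : ℕ) (v : V), (G.Iset le k v).Nonempty := by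
  intro k
  induction k with
  | zero =>
    intro v
    by_cases hF : v ∈ G.F <;> simp [MWGame.Iset, hF]
  | succ k IH =>
    intro v
    by_cases hF : v ∈ G.F
    · simp [MWGame.Iset, hF]
    · have hTop : ∀ v', (⊤ : CostP d) ∈ addW (upSet le (G.Iset le k v')) (G.w v v') := by
        intro v'
        obtain ⟨m, hm⟩ := IH v'
        exact ⟨⊤, ⟨m, hm, qle_top' hle m⟩, top_eq_add⟩
      by_cases h1 : v ∈ G.V1
      · simp only [MWGame.Iset, hF, h1, if_true, if_false]
        obtain ⟨v', hE⟩ := G.succ_nonempty v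
        have : (⊤ : CostP d) ∈ ⋃ v' ∈ { u | G.E v u }, addW (upSet le (G.Iset le k v')) (G.w v v') := by
          exact Set.mem_biUnion hE (hTop v')
        obtain ⟨m, hm, -⟩ := exists_minimal_le hle this
        exact ⟨m, hm⟩
      · simp only [MWGame.Iset, hF, h1, if_true, if_false]
        have : (⊤ : CostP d) ∈ ⋂ v' ∈ { u | G.E v u }, addW (upSet le (G.Iset le k v')) (G.w v v') := by
          exact Set.mem_biInter fun v' _ => hTop v'
        obtain ⟨m, hm, -⟩ := exists_minimal_le hle this
        exact ⟨m, hm⟩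

lemma UU_top (hle : le = leC ∨ le = leL) (k : ℕ) (v : V) : (⊤ : CostP d) ∈ UU G le k v := by
  obtain ⟨m, hm⟩ := Iset_nonempty G hle k v
  exact ⟨m, hm, qle_top' hle m⟩

lemma memU1_iff (hle : le = leC ∨ le = leL) {v : V} (hF : v ∉ G.F) (h1 : v ∈ G.V1)
    (k : ℕ) (b : CostP d) :
    b ∈ UU G le (k+1) v ↔ ∃ v', G.E v v' ∧ ∃ y ∈ UU G le k v',
      le (y + fun i => ((G.w v v' i : ℕ∞))) b := by
  have hIset : G.Iset le (k+1) v =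
      minimalSet le (⋃ v' ∈ { u | G.E v u }, addW (upSet le (G.Iset le k v')) (G.w v v')) := by
    simp [MWGame.Iset, hF, h1]
  rw [UU, hIset, upSet_minimalSet hle]
  constructor
  · rintro ⟨z, hz, hzb⟩
    simp only [Set.mem_iUnion, Set.mem_setOf_eq] at hz
    obtain ⟨v', hE, hzmem⟩ := hz
    obtain ⟨y, hy, rfl⟩ := hzmem
    exact ⟨v', hE, y, hy, hzb⟩
  · rintro ⟨v', hE, y, hy, hyb⟩
    refine ⟨y + fun i => ((G.w v v' i : ℕ∞)), ?_, hyb⟩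
    exact Set.mem_biUnion hE ⟨y, hy, rfl⟩

lemma memU2_iff (hle : le = leC ∨ le = leL) {v : V} (hF : v ∉ G.F) (h1 : v ∉ G.V1)
    (k : ℕ) (b : CostP d) :
    b ∈ UU G le (k+1) v ↔ ∃ z, le z b ∧ ∀ v', G.E v v' →
      ∃ y ∈ UU G le k v', z = y + fun i => ((G.w v v' i : ℕ∞)) := by
  have hIset : G.Iset le (k+1) v =
      minimalSet le (⋂ v' ∈ { u | G.E v u }, addW (upSet le (G.Iset le k v')) (G.w v v')) := by
    simp [MWGame.Iset, hF, h1]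
  rw [UU, hIset, upSet_minimalSet hle]
  constructor
  · rintro ⟨z, hz, hzb⟩
    refine ⟨z, hzb, fun v' hE => ?_⟩
    simp only [Set.mem_iInter, Set.mem_setOf_eq] at hz
    exact hz v' hE
  · rintro ⟨z, hzb, hz⟩
    exact ⟨z, Set.mem_biInter fun v' hE => hz v' hE, hzb⟩

end GameFacts
section MonoFacts

variable {V : Type*} {d : ℕ} (G : MWGame V d) {le : CostP d → CostP d → Prop}

lemma le_add_weight (hle : le = leC ∨ le = leL) (y : CostP d) (c : Fin d → ℕ) :
    le y (y + fun i => ((c i : ℕ∞))) :=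
  qle_of_forall_le hle fun i => le_self_add

lemma UU_mono_succ (hle : le = leC ∨ le = leL) :
    ∀ (k : ℕ) (v : V), UU G le k v ⊆ UU G le (k+1) v := by
  intro k
  induction k with
  | zero =>
    intro v b hb
    by_cases hF : v ∈ G.F
    · rw [UU_F G hF] at hb ⊢; exact hb
    · have hb' : le ⊤ b := by
        obtain ⟨m, hm, hmb⟩ := hb
        have : m = ⊤ := by
          have : G.Iset le 0 v = {⊤} := by simp [MWGame.Iset, hF]
          rw [this] at hm; exact hm
        rwa [this] at hmb
      have htop : (⊤ : CostP d) ∈ UU G le 1 v := by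
        by_cases h1 : v ∈ G.V1
        · rw [memU1_iff G hle hF h1]
          obtain ⟨v', hE⟩ := G.succ_nonempty v
          exact ⟨v', hE, ⊤, UU_top G hle 0 v', qle_top' hle _⟩
        · rw [memU2_iff G hle hF h1]
          exact ⟨⊤, qle_refl' hle ⊤, fun v' hE => ⟨⊤, UU_top G hle 0 v', top_eq_add⟩⟩
      exact UU_upclosed G hle htop hb'
  | succ k IH =>
    intro v b hb
    by_cases hF : v ∈ G.F
    · rw [UU_F G hF] at hb ⊢; exact hb
    · by_cases h1 : v ∈ G.V1
      · obtain ⟨v', hE, y, hy, hyb⟩ := (memU1_iff G hle hF h1 k b).mp hb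
        exact (memU1_iff G hle hF h1 (k+1) b).mpr ⟨v', hE, y, IH v' hy, hyb⟩
      · obtain ⟨z, hzb, hz⟩ := (memU2_iff G hle hF h1 k b).mp hb
        refine (memU2_iff G hle hF h1 (k+1) b).mpr ⟨z, hzb, fun v' hE => ?_⟩
        obtain ⟨y, hy, hzy⟩ := hz v' hE
        exact ⟨y, IH v' hy, hzy⟩

lemma UU_mono (hle : le = leC ∨ le = leL) {k l : ℕ} (hkl : k ≤ l) (v : V) :
    UU G le k v ⊆ UU G le l v := by
  induction l with
  | zero => have : k = 0 := Nat.le_zero.mp hkl; subst this; exact fun _ h => h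
  | succ l IH =>
    rcases Nat.lt_succ_iff_lt_or_eq.mp (Nat.lt_succ_of_le hkl) with h | h
    · exact fun b hb => UU_mono_succ G hle l v (IH (Nat.lt_succ_iff.mp h) hb)
    · subst h; exact fun _ h => h

lemma UU_step (hle : le = leC ∨ le = leL) {R : ℕ} {v : V} {b : CostP d}
    (hb : b ∈ UU G le (R+1) v) (hnb : b ∉ UU G le R v) :
    ∃ v' b', G.E v v' ∧ b' ∈ UU G le R v' ∧ (∀ j, j < R → b' ∉ UU G le j v') ∧ le b' b := by
  have hF : v ∉ G.F := by
    intro hF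
    rw [UU_F G hF] at hb
    rw [UU_F G hF] at hnb
    exact hnb hb
  by_cases h1 : v ∈ G.V1
  · obtain ⟨v', hE, y, hy, hyb⟩ := (memU1_iff G hle hF h1 R b).mp hb
    have hex : ∃ j, y ∈ UU G le j v' := ⟨R, hy⟩
    have hR' : Nat.find hex ≤ R := Nat.find_le hy
    have hyR' : y ∈ UU G le (Nat.find hex) v' := Nat.find_spec hex
    rcases lt_or_eq_of_le hR' with h | h
    · exfalso
      apply hnb
      have hb' : b ∈ UU G le (Nat.find hex + 1) v :=
        (memU1_iff G hle hF h1 (Nat.find hex) b).mpr ⟨v', hE, y, hyR', hyb⟩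
      exact UU_mono G hle (Nat.succ_le_of_lt h) v hb'
    · refine ⟨v', y, hE, h ▸ hyR', fun j hj => Nat.find_min hex (h ▸ hj), ?_⟩
      exact qle_trans' hle (le_add_weight hle y (G.w v v')) hyb
  · obtain ⟨z, hzb, hz⟩ := (memU2_iff G hle hF h1 R b).mp hb
    cases R with
    | zero =>
      obtain ⟨v', hE⟩ := G.succ_nonempty v
      obtain ⟨y, hy, hzy⟩ := hz v' hE
      refine ⟨v', y, hE, hy, fun j hj => absurd hj (Nat.not_lt_zero j), ?_⟩
      exact qle_trans' hle (le_add_weight hle y (G.w v v')) (hzy ▸ hzb)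
    | succ R₀ =>
      have hex : ∃ v', G.E v v' ∧
          ¬ ∃ y ∈ UU G le R₀ v', z = y + fun i => ((G.w v v' i : ℕ∞)) := by
        by_contra hc
        push_neg at hc
        apply hnb
        refine (memU2_iff G hle hF h1 R₀ b).mpr ⟨z, hzb, fun v' hE => ?_⟩
        obtain ⟨y, hy, hzy⟩ := hc v' hE
        exact ⟨y, hy, hzy⟩
      obtain ⟨v', hE, hno⟩ := hex
      obtain ⟨y, hy, hzy⟩ := hz v' hE
      refine ⟨v', y, hE, hy, fun j hj hyj => ?_, ?_⟩
      · exact hno ⟨y, UU_mono G hle (Nat.lt_succ_iff.mp hj) v' hyj, hzy⟩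
      · exact qle_trans' hle (le_add_weight hle y (G.w v v')) (hzy ▸ hzb)

end MonoFacts

section ChainFacts

variable {V : Type*} [Fintype V] {d : ℕ} (G : MWGame V d) {le : CostP d → CostP d → Prop}

lemma UU_chain (hle : le = leC ∨ le = leL) :
    ∀ (R : ℕ) (S : Finset V) (v : V) (b : CostP d),
      b ∈ UU G le R v → (∀ j, j < R → b ∉ UU G le j v) → v ∉ S →
      (∀ u ∈ S, ∃ c, le b c ∧ c ∉ UU G le R u) →
      R + S.card + 1 ≤ Fintype.card V := by
  intro R
  induction R with
  | zero =>
    intro S v b _ _ hvS _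
    have h1 : (insert v S).card = S.card + 1 := Finset.card_insert_of_notMem hvS
    have h2 : (insert v S).card ≤ Fintype.card V := Finset.card_le_univ _
    omega
  | succ R₀ IH =>
    intro S v b hb hmin hvS hS
    obtain ⟨v', b', hE, hb', hmin', hle'⟩ :=
      UU_step G hle hb (hmin R₀ (Nat.lt_succ_self _))
    have hS' : ∀ u ∈ insert v S, ∃ c, le b' c ∧ c ∉ UU G le R₀ u := by
      intro u hu
      rcases Finset.mem_insert.mp hu with rfl | hu
      · exact ⟨b, hle', hmin R₀ (Nat.lt_succ_self _)⟩
      · obtain ⟨c, hc1, hc2⟩ := hS u hu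
        exact ⟨c, qle_trans' hle hle' hc1, fun h => hc2 (UU_mono_succ G hle R₀ u h)⟩
    have hv'S : v' ∉ insert v S := by
      intro hmem
      obtain ⟨c, hc1, hc2⟩ := hS' v' hmem
      exact hc2 (UU_upclosed G hle hb' hc1)
    have := IH (insert v S) v' b' hb' hmin' hv'S hS'
    rw [Finset.card_insert_of_notMem hvS] at this
    omega

lemma UU_stab (hle : le = leC ∨ le = leL) {k : ℕ} {v : V} {b : CostP d}
    (hb : b ∈ UU G le k v) : b ∈ UU G le (Fintype.card V - 1) v := by
  have hex : ∃ j, b ∈ UU G le j v := ⟨k, hb⟩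
  have h1 : b ∈ UU G le (Nat.find hex) v := Nat.find_spec hex
  have h2 : ∀ j, j < Nat.find hex → b ∉ UU G le j v := fun j hj => Nat.find_min hex hj
  have h3 := UU_chain G hle (Nat.find hex) ∅ v b h1 h2 (Finset.notMem_empty v)
    (fun u hu => absurd hu (Finset.notMem_empty u))
  simp only [Finset.card_empty] at h3
  exact UU_mono G hle (by omega) v h1

end ChainFacts
/-- The fixpoint algorithm reaches its fixpoint within at most `|V|`
iterations: `I^l(v) = I^{|V|}(v)` for every `l ≥ |V|`. -/
theorem stmt3 {V : Type*} [Fintype V] {d : ℕ} (hd : 1 ≤ d) (G : MWGame V d)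
    (le : CostP d → CostP d → Prop) (hle : le = leC ∨ le = leL) :
    ∀ (v : V) (l : ℕ), Fintype.card V ≤ l →
      G.Iset le l v = G.Iset le (Fintype.card V) v := by
  intro v l hl
  have hN : 1 ≤ Fintype.card V := Fintype.card_pos_iff.mpr ⟨v⟩
  have hU : ∀ k, Fintype.card V - 1 ≤ k →
      ∀ v', UU G le k v' = UU G le (Fintype.card V - 1) v' := by
    intro k hk v'
    ext b
    exact ⟨fun h => UU_stab G hle h, fun h => UU_mono G hle hk v' h⟩
  obtain ⟨l₀, rfl⟩ : ∃ l₀, l = l₀ + 1 := ⟨l - 1, by omega⟩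
  obtain ⟨N₀, hN₀⟩ : ∃ N₀, Fintype.card V = N₀ + 1 := ⟨Fintype.card V - 1, by omega⟩
  have key : ∀ v', upSet le (G.Iset le l₀ v') = upSet le (G.Iset le N₀ v') := by
    intro v'
    have h1 := hU l₀ (by omega) v'
    have h2 := hU N₀ (by omega) v'
    have h3 := h1.trans h2.symm
    simpa [UU] using h3
  rw [hN₀]
  show G.Iset le (l₀+1) v = G.Iset le (N₀+1) v
  simp only [MWGame.Iset]
  simp only [key]
end

section
/- Let G be a d-weighted reachability game, let ≲ be the lexicographic order ≤_L on (ℕ ∪ {∞})^d, let u be a vertex, and let c ∈ minimal(Ensure(u)) with c ≠ (∞,…,∞). Then there exists a positional strategy σ₁ of Player 1 from u (i.e., σ₁(hv) = σ₁(h'v) whenever the histories hv and h'v end in the same vertex v) such that Cost(Out(σ₁,σ₂,u)) ≤_L c for every strategy σ₂ of Player 2. In other words, positional lexico-optimal strategies exist. -/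
open Classical

-- === auxiliary development ===
instance finWFaux (d : ℕ) : WellFoundedLT (Fin d) := inferInstance
noncomputable instance myLOaux (d : ℕ) : LinearOrder (Lex (Fin d → ℕ∞)) :=
  @Pi.Lex.linearOrder _ _ _ (finWFaux d) _
instance myWFaux (d : ℕ) : WellFoundedLT (Lex (Fin d → ℕ∞)) :=
  Function.Lex.wellFoundedLT

namespace Aux12

variable {d : ℕ}

lemma ltL_iff {x y : CostP d} : ltL x y ↔ toLex x < toLex y := Iff.rfl

lemma leL_iff {x y : CostP d} : leL x y ↔ toLex x ≤ toLex y := by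
  rw [le_iff_lt_or_eq]
  constructor
  · rintro (h | h)
    · exact Or.inr (congrArg toLex h)
    · exact Or.inl h
  · rintro (h | h)
    · exact Or.inr h
    · exact Or.inl (toLex_inj.mp h)

lemma le_topL (x : Lex (Fin d → ℕ∞)) : x ≤ toLex (⊤ : CostP d) :=
  Pi.toLex_monotone le_top

lemma topL_le {x : Lex (Fin d → ℕ∞)} (h : toLex (⊤ : CostP d) ≤ x) :
    x = toLex (⊤ : CostP d) := le_antisymm (le_topL x) h

lemma add_topc (a : CostP d) : a + (⊤ : CostP d) = ⊤ :=
  funext fun i => add_top _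

lemma add_cancel_c {a x y : CostP d} (ha : ∀ i, a i ≠ ⊤) (h : a + x = a + y) : x = y :=
  funext fun i => WithTop.add_left_cancel (ha i) (congrFun h i)

lemma addL_lt_iff (a : CostP d) (ha : ∀ i, a i ≠ ⊤) {x y : CostP d} :
    toLex (a + x) < toLex (a + y) ↔ toLex x < toLex y := by
  constructor
  · rintro ⟨i, hpre, hlt⟩
    exact ⟨i, fun j hj => WithTop.add_left_cancel (ha j) (hpre j hj),
      (WithTop.add_lt_add_iff_left (ha i)).mp hlt⟩
  · rintro ⟨i, hpre, hlt⟩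
    refine ⟨i, fun j hj => ?_, (WithTop.add_lt_add_iff_left (ha i)).mpr hlt⟩
    exact congrArg (fun t => a j + t) (hpre j hj)

lemma addL_le_iff (a : CostP d) (ha : ∀ i, a i ≠ ⊤) {x y : CostP d} :
    toLex (a + x) ≤ toLex (a + y) ↔ toLex x ≤ toLex y := by
  rw [le_iff_lt_or_eq, le_iff_lt_or_eq]
  erw [addL_lt_iff a ha]
  rw [toLex_inj, toLex_inj]
  constructor
  · rintro (h | h)
    · exact Or.inl h
    · exact Or.inr (add_cancel_c ha h)
  · rintro (h | h)
    · exact Or.inl h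
    · exact Or.inr (by rw [h])

lemma eventually_const (f : ℕ → Lex (Fin d → ℕ∞)) (hf : ∀ k, f (k + 1) ≤ f k) :
    ∃ N, ∀ m, N ≤ m → f m = f N := by
  have hanti : Antitone f := antitone_nat_of_succ_le hf
  obtain ⟨x, ⟨N, rfl⟩, hmin⟩ :=
    (IsWellFounded.wf (α := Lex (Fin d → ℕ∞)) (r := (· < ·))).has_min
      (Set.range f) ⟨f 0, ⟨0, rfl⟩⟩
  exact ⟨N, fun m hm => le_antisymm (hanti hm) (not_lt.mp (hmin (f m) ⟨m, rfl⟩))⟩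

end Aux12

namespace MWGame

open Aux12

variable {V : Type*} {d : ℕ}

/-- Successors of a vertex, as a Finset. -/
noncomputable def succs [Fintype V] (G : MWGame V d) (v : V) : Finset V :=
  Finset.univ.filter (fun u => G.E v u)

lemma mem_succs [Fintype V] (G : MWGame V d) {v u : V} : u ∈ G.succs v ↔ G.E v u := by
  simp [succs]

lemma succs_nonempty [Fintype V] (G : MWGame V d) (v : V) : (G.succs v).Nonempty := by
  obtain ⟨v', hv'⟩ := G.succ_nonempty v
  exact ⟨v', (G.mem_succs).mpr hv'⟩

/-- Weights as extended naturals. -/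
def wE (G : MWGame V d) (v v' : V) : CostP d := fun i => (G.w v v' i : ℕ∞)

lemma wE_ne_top (G : MWGame V d) (v v' : V) : ∀ i, G.wE v v' i ≠ ⊤ := fun _ =>
  WithTop.coe_ne_top

/-- One Bellman iteration step. -/
noncomputable def bell [Fintype V] (G : MWGame V d) (f : V → Lex (Fin d → ℕ∞)) (v : V) :
    Lex (Fin d → ℕ∞) :=
  if v ∈ G.F then toLex 0
  else if v ∈ G.V1 then
    ((G.succs v).image (fun v' => toLex (G.wE v v' + ofLex (f v')))).min'
      ((G.succs_nonempty v).image _)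
  else
    ((G.succs v).image (fun v' => toLex (G.wE v v' + ofLex (f v')))).max'
      ((G.succs_nonempty v).image _)

/-- Value iteration. -/
noncomputable def valIt [Fintype V] (G : MWGame V d) : ℕ → V → Lex (Fin d → ℕ∞)
  | 0 => fun v => if v ∈ G.F then toLex 0 else toLex ⊤
  | k + 1 => G.bell (G.valIt k)

variable [Fintype V] (G : MWGame V d)

lemma bell_F {f : V → Lex (Fin d → ℕ∞)} {v : V} (hv : v ∈ G.F) : G.bell f v = toLex 0 := by
  simp [bell, hv]

lemma bell_le_p1 {f : V → Lex (Fin d → ℕ∞)} {v v' : V} (hv : v ∉ G.F) (h1 : v ∈ G.V1)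
    (hE : G.E v v') : G.bell f v ≤ toLex (G.wE v v' + ofLex (f v')) := by
  rw [bell, if_neg hv, if_pos h1]
  exact Finset.min'_le _ _ (Finset.mem_image_of_mem (fun v' => toLex (G.wE v v' + ofLex (f v'))) ((G.mem_succs).mpr hE))

lemma bell_p1_attain {f : V → Lex (Fin d → ℕ∞)} {v : V} (hv : v ∉ G.F) (h1 : v ∈ G.V1) :
    ∃ v', G.E v v' ∧ toLex (G.wE v v' + ofLex (f v')) = G.bell f v := by
  rw [bell, if_neg hv, if_pos h1]
  have hne : ((G.succs v).image (fun v' => toLex (G.wE v v' + ofLex (f v')))).Nonempty :=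
    (G.succs_nonempty v).image _
  obtain ⟨y, hy, hy2⟩ := Finset.mem_image.mp (Finset.min'_mem _ hne)
  exact ⟨y, (G.mem_succs).mp hy, hy2⟩

lemma p2_le_bell {f : V → Lex (Fin d → ℕ∞)} {v v' : V} (hv : v ∉ G.F) (h1 : v ∉ G.V1)
    (hE : G.E v v') : toLex (G.wE v v' + ofLex (f v')) ≤ G.bell f v := by
  rw [bell, if_neg hv, if_neg h1]
  exact Finset.le_max' _ _ (Finset.mem_image_of_mem (fun v' => toLex (G.wE v v' + ofLex (f v'))) ((G.mem_succs).mpr hE))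

lemma bell_p2_attain {f : V → Lex (Fin d → ℕ∞)} {v : V} (hv : v ∉ G.F) (h1 : v ∉ G.V1) :
    ∃ v', G.E v v' ∧ toLex (G.wE v v' + ofLex (f v')) = G.bell f v := by
  rw [bell, if_neg hv, if_neg h1]
  have hne : ((G.succs v).image (fun v' => toLex (G.wE v v' + ofLex (f v')))).Nonempty :=
    (G.succs_nonempty v).image _
  obtain ⟨y, hy, hy2⟩ := Finset.mem_image.mp (Finset.max'_mem _ hne)
  exact ⟨y, (G.mem_succs).mp hy, hy2⟩

lemma bell_mono {f g : V → Lex (Fin d → ℕ∞)} (h : ∀ v, f v ≤ g v) (v : V) :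
    G.bell f v ≤ G.bell g v := by
  by_cases hv : v ∈ G.F
  · rw [G.bell_F hv, G.bell_F hv]
  by_cases h1 : v ∈ G.V1
  · obtain ⟨v', hE, heq⟩ := G.bell_p1_attain (f := g) hv h1
    rw [← heq]
    exact le_trans (G.bell_le_p1 hv h1 hE)
      ((addL_le_iff _ (G.wE_ne_top v v')).mpr (h v'))
  · obtain ⟨v', hE, heq⟩ := G.bell_p2_attain (f := f) hv h1
    rw [← heq]
    exact le_trans ((addL_le_iff _ (G.wE_ne_top v v')).mpr (h v'))
      (G.p2_le_bell hv h1 hE)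

lemma valIt_F {v : V} (hv : v ∈ G.F) : ∀ k, G.valIt k v = toLex 0
  | 0 => by simp [valIt, hv]
  | k + 1 => G.bell_F hv

lemma valIt_succ_le (k : ℕ) (v : V) : G.valIt (k + 1) v ≤ G.valIt k v := by
  induction k generalizing v with
  | zero =>
    by_cases hv : v ∈ G.F
    · rw [G.valIt_F hv 1, G.valIt_F hv 0]
    · rw [show G.valIt 0 v = toLex ⊤ from by simp [valIt, hv]]
      exact le_topL _
  | succ k ih => exact G.bell_mono (fun v' => ih v') v

lemma valIt_antitone (v : V) : Antitone (fun k => G.valIt k v) :=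
  antitone_nat_of_succ_le (fun k => G.valIt_succ_le k v)

/-- A bound after which value iteration has stabilized. -/
noncomputable def Kbound : ℕ :=
  Finset.univ.sup (fun v : V =>
    Classical.choose (eventually_const (fun k => G.valIt k v) (fun k => G.valIt_succ_le k v)))

lemma valIt_stab (v : V) (k : ℕ) (hk : G.Kbound ≤ k) :
    G.valIt k v = G.valIt G.Kbound v := by
  have hNv := Classical.choose_spec
    (eventually_const (fun k => G.valIt k v) (fun k => G.valIt_succ_le k v))
  have hle : Classical.choose
      (eventually_const (fun k => G.valIt k v) (fun k => G.valIt_succ_le k v)) ≤ G.Kbound :=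
    Finset.le_sup (f := fun v : V => Classical.choose
      (eventually_const (fun k => G.valIt k v) (fun k => G.valIt_succ_le k v)))
      (Finset.mem_univ v)
  exact (hNv k (le_trans hle hk)).trans (hNv G.Kbound hle).symm

/-- The value of the game. -/
noncomputable def Val (v : V) : Lex (Fin d → ℕ∞) := G.valIt G.Kbound v

lemma Val_le_valIt (k : ℕ) (v : V) : G.Val v ≤ G.valIt k v := by
  rcases le_total k G.Kbound with h | h
  · exact G.valIt_antitone v h
  · rw [G.valIt_stab v k h]; exact le_of_eq rfl

lemma bell_Val (v : V) : G.bell G.Val v = G.Val v := by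
  have : G.valIt (G.Kbound + 1) v = G.valIt G.Kbound v :=
    G.valIt_stab v (G.Kbound + 1) (Nat.le_succ _)
  exact this

lemma Val_F {v : V} (hv : v ∈ G.F) : G.Val v = toLex 0 := G.valIt_F hv _

/-- The rank of a vertex: the first iteration at which its value is reached. -/
noncomputable def rank (v : V) : ℕ :=
  Nat.find (⟨G.Kbound, rfl⟩ : ∃ k, G.valIt k v = G.Val v)

lemma valIt_rank (v : V) : G.valIt (G.rank v) v = G.Val v :=
  Nat.find_spec (⟨G.Kbound, rfl⟩ : ∃ k, G.valIt k v = G.Val v)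

lemma valIt_eq_Val {v : V} {k : ℕ} (hk : G.rank v ≤ k) : G.valIt k v = G.Val v := by
  rcases le_total k G.Kbound with h | h
  · exact le_antisymm (by rw [← G.valIt_rank v]; exact G.valIt_antitone v hk) (G.Val_le_valIt k v)
  · rw [G.valIt_stab v k h]; rfl

lemma rank_pos {v : V} (hv : v ∉ G.F) (ht : G.Val v ≠ toLex ⊤) : 1 ≤ G.rank v := by
  by_contra h
  have h0 : G.rank v = 0 := by omega
  have := G.valIt_rank v
  rw [h0] at this
  rw [show G.valIt 0 v = toLex ⊤ from by simp [valIt, hv]] at this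
  exact ht this.symm

end MWGame

namespace MWGame

open Aux12

variable {V : Type*} {d : ℕ} [Fintype V] (G : MWGame V d)

lemma Val_bell_eq (v : V) : G.Val v = G.bell G.Val v := (G.bell_Val v).symm

lemma p1_le {v v' : V} (hv : v ∉ G.F) (h1 : v ∈ G.V1) (hE : G.E v v') :
    G.Val v ≤ toLex (G.wE v v' + ofLex (G.Val v')) := by
  rw [G.Val_bell_eq v]
  exact G.bell_le_p1 hv h1 hE

lemma p2_attain {v : V} (hv : v ∉ G.F) (h1 : v ∉ G.V1) :
    ∃ v', G.E v v' ∧ toLex (G.wE v v' + ofLex (G.Val v')) = G.Val v := by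
  obtain ⟨v', hE, heq⟩ := G.bell_p2_attain (f := G.Val) hv h1
  exact ⟨v', hE, heq.trans (G.bell_Val v)⟩

/-- Existence of a good positional choice at a Player-1 vertex. -/
lemma exists_good {v : V} (hv : v ∉ G.F) (h1 : v ∈ G.V1) (ht : G.Val v ≠ toLex ⊤) :
    ∃ v', G.E v v' ∧ toLex (G.wE v v' + ofLex (G.Val v')) = G.Val v ∧
      G.rank v' < G.rank v := by
  have hr1 : 1 ≤ G.rank v := G.rank_pos hv ht
  have hrk : G.valIt (G.rank v - 1 + 1) v = G.Val v := by
    rw [Nat.sub_add_cancel hr1]; exact G.valIt_rank v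
  obtain ⟨v', hE, heq⟩ := G.bell_p1_attain (f := G.valIt (G.rank v - 1)) hv h1
  have heq' : toLex (G.wE v v' + ofLex (G.valIt (G.rank v - 1) v')) = G.Val v := by
    rw [heq]; exact hrk
  have hle : toLex (G.wE v v' + ofLex (G.Val v')) ≤ G.Val v := by
    refine le_trans ((addL_le_iff _ (G.wE_ne_top v v')).mpr ?_) (le_of_eq heq')
    exact G.Val_le_valIt _ v'
  have hge : G.Val v ≤ toLex (G.wE v v' + ofLex (G.Val v')) := G.p1_le hv h1 hE
  have heqv : toLex (G.wE v v' + ofLex (G.Val v')) = G.Val v := le_antisymm hle hge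
  have hvv : G.valIt (G.rank v - 1) v' = G.Val v' := by
    have := heq'.trans heqv.symm
    have h2 := add_cancel_c (G.wE_ne_top v v') (toLex_inj.mp this)
    exact ofLex_inj.mp h2
  have hrle : G.rank v' ≤ G.rank v - 1 := Nat.find_le hvv
  exact ⟨v', hE, heqv, lt_of_le_of_lt hrle (by omega)⟩

/-- The key property at Player-2 vertices. -/
lemma p2_bound {v v' : V} (hv : v ∉ G.F) (h1 : v ∉ G.V1) (ht : G.Val v ≠ toLex ⊤)
    (hE : G.E v v') :
    toLex (G.wE v v' + ofLex (G.Val v')) ≤ G.Val v ∧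
      (G.rank v' < G.rank v ∨ toLex (G.wE v v' + ofLex (G.Val v')) < G.Val v) := by
  have hr1 : 1 ≤ G.rank v := G.rank_pos hv ht
  have hrk : G.valIt (G.rank v - 1 + 1) v = G.Val v := by
    rw [Nat.sub_add_cancel hr1]; exact G.valIt_rank v
  have hub : toLex (G.wE v v' + ofLex (G.valIt (G.rank v - 1) v')) ≤ G.Val v := by
    rw [← hrk]
    exact G.p2_le_bell hv h1 hE
  have hValle : G.Val v' ≤ G.valIt (G.rank v - 1) v' := G.Val_le_valIt _ v'
  have hle : toLex (G.wE v v' + ofLex (G.Val v')) ≤ G.Val v :=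
    le_trans ((addL_le_iff _ (G.wE_ne_top v v')).mpr hValle) hub
  refine ⟨hle, ?_⟩
  rcases eq_or_lt_of_le hValle with hEq | hLt
  · left
    have : G.valIt (G.rank v - 1) v' = G.Val v' := hEq.symm
    exact lt_of_le_of_lt (Nat.find_le this) (by omega)
  · right
    calc toLex (G.wE v v' + ofLex (G.Val v'))
        < toLex (G.wE v v' + ofLex (G.valIt (G.rank v - 1) v')) :=
          (addL_lt_iff _ (G.wE_ne_top v v')).mpr hLt
      _ ≤ G.Val v := hub

end MWGame

namespace MWGame

variable {V : Type*} {d : ℕ}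

/-- Total weight along a path. -/
noncomputable def chain (G : MWGame V d) : List V → CostP d
  | [] => 0
  | [_] => 0
  | a :: b :: t => G.wE a b + chain G (b :: t)

lemma chain_nil (G : MWGame V d) : G.chain [] = 0 := rfl
lemma chain_single (G : MWGame V d) (a : V) : G.chain [a] = 0 := rfl
lemma chain_cons (G : MWGame V d) (a b : V) (t : List V) :
    G.chain (a :: b :: t) = G.wE a b + G.chain (b :: t) := by
  rw [chain]

lemma chain_ne_top (G : MWGame V d) (l : List V) : ∀ i, G.chain l i ≠ ⊤ := by
  induction l with
  | nil => intro i; simp [chain_nil]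
  | cons a t ih =>
    cases t with
    | nil => intro i; simp [chain_single]
    | cons b t' =>
      intro i
      rw [chain_cons]
      exact WithTop.add_ne_top.mpr ⟨G.wE_ne_top a b i, ih i⟩

lemma chain_concat (G : MWGame V d) (l : List V) (a b : V) :
    G.chain (l ++ [a, b]) = G.chain (l ++ [a]) + G.wE a b := by
  induction l with
  | nil =>
    show G.chain [a, b] = G.chain [a] + G.wE a b
    simp [chain_cons, chain_single]
  | cons c l ih =>
    cases l with
    | nil =>
      show G.chain [c, a, b] = G.chain [c, a] + G.wE a b
      simp [chain_cons, chain_single, add_assoc]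
    | cons e l' =>
      show G.chain (c :: ((e :: l') ++ [a, b])) = G.chain (c :: ((e :: l') ++ [a])) + G.wE a b
      rw [show ((e :: l') ++ [a, b] : List V) = e :: (l' ++ [a, b]) from rfl,
        show ((e :: l') ++ [a] : List V) = e :: (l' ++ [a]) from rfl,
        chain_cons, chain_cons]
      rw [show (e :: (l' ++ [a, b]) : List V) = (e :: l') ++ [a, b] from rfl,
        show (e :: (l' ++ [a]) : List V) = (e :: l') ++ [a] from rfl, ih, add_assoc]

end MWGame

namespace MWGame

open Aux12

variable {V : Type*} {d : ℕ}

lemma out_zero (G : MWGame V d) (σ₁ : G.Strat1) (σ₂ : G.Strat2) (v : V) :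
    G.out σ₁ σ₂ v 0 = v := rfl

lemma outAux_succ (G : MWGame V d) (σ₁ : G.Strat1) (σ₂ : G.Strat2) (v : V) (n : ℕ) :
    G.outAux σ₁ σ₂ v (n + 1) =
      ((G.outAux σ₁ σ₂ v n).1 ++ [(G.outAux σ₁ σ₂ v n).2],
        if (G.outAux σ₁ σ₂ v n).2 ∈ G.V1 then
          σ₁.1 (G.outAux σ₁ σ₂ v n).1 (G.outAux σ₁ σ₂ v n).2
        else σ₂.1 (G.outAux σ₁ σ₂ v n).1 (G.outAux σ₁ σ₂ v n).2) := rfl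

lemma out_succ (G : MWGame V d) (σ₁ : G.Strat1) (σ₂ : G.Strat2) (v : V) (n : ℕ) :
    G.out σ₁ σ₂ v (n + 1) =
      if G.out σ₁ σ₂ v n ∈ G.V1 then
        σ₁.1 (G.outAux σ₁ σ₂ v n).1 (G.out σ₁ σ₂ v n)
      else σ₂.1 (G.outAux σ₁ σ₂ v n).1 (G.out σ₁ σ₂ v n) := rfl

lemma out_edge (G : MWGame V d) (σ₁ : G.Strat1) (σ₂ : G.Strat2) (v : V) (n : ℕ) :
    G.E (G.out σ₁ σ₂ v n) (G.out σ₁ σ₂ v (n + 1)) := by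
  rw [out_succ]
  by_cases h1 : G.out σ₁ σ₂ v n ∈ G.V1
  · rw [if_pos h1]; exact σ₁.2 _ _ h1
  · rw [if_neg h1]; exact σ₂.2 _ _ h1

/-- Accumulated cost after `n` steps. -/
noncomputable def acc (G : MWGame V d) (σ₁ : G.Strat1) (σ₂ : G.Strat2) (v : V) (n : ℕ) :
    CostP d :=
  G.chain ((G.outAux σ₁ σ₂ v n).1 ++ [(G.outAux σ₁ σ₂ v n).2])

lemma acc_zero (G : MWGame V d) (σ₁ : G.Strat1) (σ₂ : G.Strat2) (v : V) :
    G.acc σ₁ σ₂ v 0 = 0 := rfl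

lemma acc_ne_top (G : MWGame V d) (σ₁ : G.Strat1) (σ₂ : G.Strat2) (v : V) (n : ℕ) :
    ∀ i, G.acc σ₁ σ₂ v n i ≠ ⊤ := G.chain_ne_top _

lemma acc_succ (G : MWGame V d) (σ₁ : G.Strat1) (σ₂ : G.Strat2) (v : V) (n : ℕ) :
    G.acc σ₁ σ₂ v (n + 1) =
      G.acc σ₁ σ₂ v n + G.wE (G.out σ₁ σ₂ v n) (G.out σ₁ σ₂ v (n + 1)) := by
  show G.chain ((G.outAux σ₁ σ₂ v (n + 1)).1 ++ [(G.outAux σ₁ σ₂ v (n + 1)).2]) = _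
  rw [outAux_succ]
  show G.chain (((G.outAux σ₁ σ₂ v n).1 ++ [(G.outAux σ₁ σ₂ v n).2]) ++
      [G.out σ₁ σ₂ v (n+1)]) = _
  rw [List.append_assoc]
  exact G.chain_concat _ _ _

lemma acc_eq_sum (G : MWGame V d) (σ₁ : G.Strat1) (σ₂ : G.Strat2) (v : V) (n : ℕ) :
    G.acc σ₁ σ₂ v n =
      fun i => ∑ m ∈ Finset.range n,
        (G.w (G.out σ₁ σ₂ v m) (G.out σ₁ σ₂ v (m + 1)) i : ℕ∞) := by
  induction n with
  | zero => funext i; simp [acc_zero]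
  | succ n ih =>
    funext i
    rw [acc_succ]
    show G.acc σ₁ σ₂ v n i + G.wE (G.out σ₁ σ₂ v n) (G.out σ₁ σ₂ v (n + 1)) i = _
    rw [ih, Finset.sum_range_succ]
    rfl

variable [Fintype V]

/-- The punishing move of Player 2. -/
noncomputable def badMove (G : MWGame V d) (x b : CostP d) (v : V) : V :=
  if hv : ∃ v', G.E v v' ∧
      ¬ (toLex (b + (G.wE v v' + ofLex (G.Val v'))) ≤ toLex x) then
    Classical.choose hv
  else Classical.choose (G.succ_nonempty v)

lemma badMove_edge (G : MWGame V d) (x b : CostP d) (v : V) : G.E v (G.badMove x b v) := by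
  rw [badMove]
  by_cases hv : ∃ v', G.E v v' ∧
      ¬ (toLex (b + (G.wE v v' + ofLex (G.Val v'))) ≤ toLex x)
  · rw [dif_pos hv]; exact (Classical.choose_spec hv).1
  · rw [dif_neg hv]; exact Classical.choose_spec (G.succ_nonempty v)

lemma badMove_spec (G : MWGame V d) {x b : CostP d} {v : V}
    (hex : ∃ v', G.E v v' ∧
      ¬ (toLex (b + (G.wE v v' + ofLex (G.Val v'))) ≤ toLex x)) :
    ¬ (toLex (b + (G.wE v (G.badMove x b v) + ofLex (G.Val (G.badMove x b v)))) ≤ toLex x) := by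
  rw [badMove, dif_pos hex]
  exact (Classical.choose_spec hex).2

/-- Soundness: the value lower-bounds anything Player 1 can ensure. -/
lemma Val_le_of_ensure (G : MWGame V d) (u : V) (x : CostP d)
    (hx : x ∈ G.Ensure leL u) : G.Val u ≤ toLex x := by
  by_cases hxt : x = ⊤
  · subst hxt; exact le_topL _
  obtain ⟨σ₁, hσ₁⟩ := hx
  by_contra hlt
  set σ₂ : G.Strat2 :=
    ⟨fun h v => G.badMove x (G.chain (h ++ [v])) v,
     fun h v _ => G.badMove_edge x _ v⟩ with hσ₂def
  set ρ : ℕ → V := G.out σ₁ σ₂ u with hρ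
  have key : ∀ n, (∀ m, m < n → ρ m ∉ G.F) →
      ¬ (toLex (G.acc σ₁ σ₂ u n + ofLex (G.Val (ρ n))) ≤ toLex x) := by
    intro n
    induction n with
    | zero =>
      intro _ hcon
      rw [acc_zero, zero_add, toLex_ofLex] at hcon
      exact hlt hcon
    | succ n ih =>
      intro hall
      have hnF : ρ n ∉ G.F := hall n (Nat.lt_succ_self n)
      have ih' := ih (fun m hm => hall m (Nat.lt_succ_of_lt hm))
      by_cases h1 : ρ n ∈ G.V1
      · have hstep : ρ (n + 1) = σ₁.1 (G.outAux σ₁ σ₂ u n).1 (ρ n) := by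
          rw [hρ, out_succ, if_pos h1]
        have hE : G.E (ρ n) (ρ (n + 1)) := G.out_edge σ₁ σ₂ u n
        have h2 : G.Val (ρ n) ≤ toLex (G.wE (ρ n) (ρ (n+1)) + ofLex (G.Val (ρ (n+1)))) :=
          G.p1_le hnF h1 hE
        intro hcon
        apply ih'
        calc toLex (G.acc σ₁ σ₂ u n + ofLex (G.Val (ρ n)))
            ≤ toLex (G.acc σ₁ σ₂ u n +
              (G.wE (ρ n) (ρ (n+1)) + ofLex (G.Val (ρ (n+1))))) := by
              refine (addL_le_iff _ (G.acc_ne_top σ₁ σ₂ u n)).mpr ?_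
              simpa using h2
          _ = toLex (G.acc σ₁ σ₂ u (n+1) + ofLex (G.Val (ρ (n+1)))) := by
              rw [acc_succ, add_assoc]
          _ ≤ toLex x := hcon
      · have hstep : ρ (n + 1) = G.badMove x (G.acc σ₁ σ₂ u n) (ρ n) := by
          rw [hρ, out_succ, if_neg h1]
          rfl
        have hex : ∃ v', G.E (ρ n) v' ∧
            ¬ (toLex (G.acc σ₁ σ₂ u n + (G.wE (ρ n) v' + ofLex (G.Val v'))) ≤ toLex x) := by
          obtain ⟨v'', hE'', heq''⟩ := G.p2_attain hnF h1
          refine ⟨v'', hE'', fun hcon => ih' ?_⟩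
          have h3 : G.wE (ρ n) v'' + ofLex (G.Val v'') = ofLex (G.Val (ρ n)) := by
            have := congrArg ofLex heq''
            rwa [ofLex_toLex] at this
          rwa [h3] at hcon
        have hspec := G.badMove_spec hex
        rw [← hstep] at hspec
        intro hcon
        apply hspec
        rw [acc_succ, add_assoc] at hcon
        exact hcon
  have hcost := hσ₁ σ₂
  by_cases hF : ∃ ℓ, ρ ℓ ∈ G.F
  · have hkey := key (Nat.find hF) (fun m hm => Nat.find_min hF hm)
    apply hkey
    have hVF : G.Val (ρ (Nat.find hF)) = toLex 0 := G.Val_F (Nat.find_spec hF)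
    rw [hVF, ofLex_toLex, add_zero]
    have hcosteq : G.cost ρ = G.acc σ₁ σ₂ u (Nat.find hF) := by
      rw [cost, dif_pos hF, G.acc_eq_sum σ₁ σ₂ u]
    rw [hcosteq] at hcost
    exact leL_iff.mp hcost
  · have hcosteq : G.cost ρ = ⊤ := by rw [cost, dif_neg hF]
    rw [hcosteq] at hcost
    have := topL_le (leL_iff.mp hcost)
    exact hxt (toLex_inj.mp this)

end MWGame


namespace MWGame

open Aux12

variable {V : Type*} {d : ℕ} [Fintype V]

/-- The positional choice function. -/
noncomputable def pos (G : MWGame V d) (v : V) : V :=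
  if hv : v ∉ G.F ∧ v ∈ G.V1 ∧ G.Val v ≠ toLex ⊤ then
    Classical.choose (G.exists_good hv.1 hv.2.1 hv.2.2)
  else Classical.choose (G.succ_nonempty v)

lemma pos_edge (G : MWGame V d) (v : V) : G.E v (G.pos v) := by
  rw [pos]
  by_cases hv : v ∉ G.F ∧ v ∈ G.V1 ∧ G.Val v ≠ toLex ⊤
  · rw [dif_pos hv]; exact (Classical.choose_spec (G.exists_good hv.1 hv.2.1 hv.2.2)).1
  · rw [dif_neg hv]; exact Classical.choose_spec (G.succ_nonempty v)

lemma pos_spec (G : MWGame V d) {v : V} (h1 : v ∉ G.F) (h2 : v ∈ G.V1)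
    (h3 : G.Val v ≠ toLex ⊤) :
    toLex (G.wE v (G.pos v) + ofLex (G.Val (G.pos v))) = G.Val v ∧
      G.rank (G.pos v) < G.rank v := by
  rw [pos, dif_pos (show v ∉ G.F ∧ v ∈ G.V1 ∧ G.Val v ≠ toLex ⊤ from ⟨h1, h2, h3⟩)]
  exact (Classical.choose_spec (G.exists_good h1 h2 h3)).2

end MWGame

theorem stmt12_aux {V : Type*} [Fintype V] {d : ℕ} (G : MWGame V d)
    (u : V) (c : CostP d)
    (hc : c ∈ minimalSet leL (G.Ensure leL u)) (hcne : c ≠ ⊤) :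
    ∃ σ₁ : G.Strat1, (∀ h h' z, σ₁.1 h z = σ₁.1 h' z) ∧
      ∀ σ₂ : G.Strat2, leL (G.cost (G.out σ₁ σ₂ u)) c := by
  open Aux12 MWGame in
  have hVu : G.Val u ≤ toLex c := G.Val_le_of_ensure u c hc.1
  refine ⟨⟨fun _ v => G.pos v, fun h v _ => G.pos_edge v⟩, fun _ _ _ => rfl, ?_⟩
  set σ₁ : G.Strat1 := ⟨fun _ v => G.pos v, fun h v _ => G.pos_edge v⟩ with hσ₁def
  intro σ₂
  set ρ : ℕ → V := G.out σ₁ σ₂ u with hρ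
  -- the not-top helper
  have nottop : ∀ n, toLex (G.acc σ₁ σ₂ u n + ofLex (G.Val (ρ n))) ≤ toLex c →
      G.Val (ρ n) ≠ toLex ⊤ := by
    intro n hle htop
    rw [htop, ofLex_toLex, add_topc] at hle
    exact hcne (toLex_inj.mp (topL_le hle))
  -- one step of the invariant
  have step : ∀ n, ρ n ∉ G.F →
      toLex (G.acc σ₁ σ₂ u n + ofLex (G.Val (ρ n))) ≤ toLex c →
      toLex (G.acc σ₁ σ₂ u (n+1) + ofLex (G.Val (ρ (n+1)))) ≤ toLex c ∧
      Prod.Lex (· < ·) (· < ·)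
        (toLex (G.acc σ₁ σ₂ u (n+1) + ofLex (G.Val (ρ (n+1)))), G.rank (ρ (n+1)))
        (toLex (G.acc σ₁ σ₂ u n + ofLex (G.Val (ρ n))), G.rank (ρ n)) := by
    intro n hnF hle
    have htop := nottop n hle
    by_cases h1 : ρ n ∈ G.V1
    · have hstep : ρ (n + 1) = G.pos (ρ n) := by
        rw [hρ, out_succ, if_pos h1]
      obtain ⟨heq, hrk⟩ := G.pos_spec hnF h1 htop
      have hkey : toLex (G.acc σ₁ σ₂ u (n+1) + ofLex (G.Val (ρ (n+1)))) =
          toLex (G.acc σ₁ σ₂ u n + ofLex (G.Val (ρ n))) := by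
        rw [acc_succ, add_assoc, ← hρ]
        congr 1
        rw [hstep]
        have := congrArg ofLex heq
        rw [ofLex_toLex] at this
        rw [this]
      refine ⟨hkey ▸ hle, ?_⟩
      rw [hkey]
      exact Prod.Lex.right _ (by rw [hstep]; exact hrk)
    · have hE : G.E (ρ n) (ρ (n+1)) := G.out_edge σ₁ σ₂ u n
      obtain ⟨hle2, hdisj⟩ := G.p2_bound hnF h1 htop hE
      have hmono : toLex (G.acc σ₁ σ₂ u (n+1) + ofLex (G.Val (ρ (n+1)))) ≤
          toLex (G.acc σ₁ σ₂ u n + ofLex (G.Val (ρ n))) := by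
        rw [acc_succ, add_assoc, ← hρ]
        refine le_trans ((addL_le_iff _ (G.acc_ne_top σ₁ σ₂ u n)).mpr ?_) le_rfl
        simpa using hle2
      refine ⟨le_trans hmono hle, ?_⟩
      rcases eq_or_lt_of_le hmono with hEq | hLt
      · rcases hdisj with hrk | hstrict
        · rw [hEq]; exact Prod.Lex.right _ hrk
        · exfalso
          have : toLex (G.acc σ₁ σ₂ u (n+1) + ofLex (G.Val (ρ (n+1)))) <
              toLex (G.acc σ₁ σ₂ u n + ofLex (G.Val (ρ n))) := by
            rw [acc_succ, add_assoc, ← hρ]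
            refine lt_of_lt_of_le ((addL_lt_iff _ (G.acc_ne_top σ₁ σ₂ u n)).mpr ?_) le_rfl
            simpa using hstrict
          exact absurd hEq (ne_of_lt this)
      · exact Prod.Lex.left _ _ hLt
  -- the invariant
  have inv : ∀ n, (∀ m, m < n → ρ m ∉ G.F) →
      toLex (G.acc σ₁ σ₂ u n + ofLex (G.Val (ρ n))) ≤ toLex c := by
    intro n
    induction n with
    | zero => intro _; rw [acc_zero, zero_add, toLex_ofLex]; exact hVu
    | succ n ih =>
      intro hall
      exact (step n (hall n (Nat.lt_succ_self n))
        (ih (fun m hm => hall m (Nat.lt_succ_of_lt hm)))).1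
  -- termination
  have hF : ∃ ℓ, ρ ℓ ∈ G.F := by
    by_contra hno
    push_neg at hno
    have hall : ∀ n, ρ n ∉ G.F := hno
    have hinv : ∀ n, toLex (G.acc σ₁ σ₂ u n + ofLex (G.Val (ρ n))) ≤ toLex c :=
      fun n => inv n (fun m _ => hall m)
    set μ : ℕ → Lex (Fin d → ℕ∞) × ℕ :=
      fun n => (toLex (G.acc σ₁ σ₂ u n + ofLex (G.Val (ρ n))), G.rank (ρ n)) with hμ
    have hdec : ∀ n, Prod.Lex (· < ·) (· < ·) (μ (n+1)) (μ n) :=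
      fun n => (step n (hall n) (hinv n)).2
    have hwf : WellFounded (Prod.Lex ((· < ·) : Lex (Fin d → ℕ∞) → _ → Prop)
        ((· < ·) : ℕ → ℕ → Prop)) :=
      WellFounded.prod_lex (IsWellFounded.wf) (Nat.lt_wfRel.wf)
    obtain ⟨z, ⟨n, rfl⟩, hmin⟩ := hwf.has_min (Set.range μ) ⟨μ 0, ⟨0, rfl⟩⟩
    exact hmin (μ (n+1)) ⟨n+1, rfl⟩ (hdec n)
  -- conclusion
  have hinvF := inv (Nat.find hF) (fun m hm => Nat.find_min hF hm)
  have hVF : G.Val (ρ (Nat.find hF)) = toLex 0 := G.Val_F (Nat.find_spec hF)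
  rw [hVF, ofLex_toLex, add_zero] at hinvF
  have hcosteq : G.cost ρ = G.acc σ₁ σ₂ u (Nat.find hF) := by
    rw [cost, dif_pos hF, G.acc_eq_sum σ₁ σ₂ u]
  rw [hcosteq]
  exact leL_iff.mpr hinvF


/-- For the lexicographic order, if `c ∈ minimal(Ensure(u))` and
`c ≠ (∞,…,∞)`, then Player 1 has a *positional* strategy from `u` ensuring `c`. -/
theorem stmt12 {V : Type*} [Fintype V] {d : ℕ} (hd : 1 ≤ d) (G : MWGame V d)
    (u : V) (c : CostP d)
    (hc : c ∈ minimalSet leL (G.Ensure leL u)) (hcne : c ≠ ⊤) :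
    ∃ σ₁ : G.Strat1, (∀ h h' z, σ₁.1 h z = σ₁.1 h' z) ∧
      ∀ σ₂ : G.Strat2, leL (G.cost (G.out σ₁ σ₂ u)) c := by
  exact stmt12_aux G u c hc hcne
end
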